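/- arXiv:1905.12009 — 7 statements merged into one kernel-verified Lean document; each statement's English description precedes it below -/
import Mathlib

section
/- Suppose the neighborhood operator N is nonexpansive in the supremum norm, i.e., ‖N q₁ − N q₂‖∞ ≤ ‖q₁ − q₂‖∞ for all Q-functions q₁, q₂. Then the operator T is a γ-contraction in the supremum norm: for all Q-functions q₁, q₂, ‖T q₁ − T q₂‖∞ ≤ γ · ‖q₁ − q₂‖∞. -/
open Finset

/-- If the neighborhood operator `N` is nonexpansive in the sup norm, then the
operator `T` defined by `(T q)(x,C) = Σ_y P x (C x) y * (r x (C x) y + γ * max_D (N q)(y,D))`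
is a `γ`-contraction in the sup norm. -/
theorem stmt0 {X A : Type*} [Fintype X] [Nonempty X] [Fintype A] [Nonempty A]
    (F : Set (X → A)) [Fintype F] [Nonempty F]
    (P : X → A → X → ℝ) (hP0 : ∀ x a y, 0 ≤ P x a y) (hP1 : ∀ x a, ∑ y, P x a y = 1)
    (r : X → A → X → ℝ) (γ : ℝ) (hγ0 : 0 < γ) (hγ1 : γ < 1)
    (N : (X × F → ℝ) → (X × F → ℝ))
    (hN : ∀ q₁ q₂ : X × F → ℝ, ‖N q₁ - N q₂‖ ≤ ‖q₁ - q₂‖)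
    (T : (X × F → ℝ) → (X × F → ℝ))
    (hT : ∀ (q : X × F → ℝ) (x : X) (C : F), T q (x, C) =
      ∑ y, P x (C.1 x) y *
        (r x (C.1 x) y + γ * (univ.sup' univ_nonempty fun D : F => N q (y, D)))) :
    ∀ q₁ q₂ : X × F → ℝ, ‖T q₁ - T q₂‖ ≤ γ * ‖q₁ - q₂‖ := by

  intro q₁ q₂
  have hM : (0:ℝ) ≤ ‖q₁ - q₂‖ := norm_nonneg _
  rw [pi_norm_le_iff_of_nonneg (by positivity)]
  rintro ⟨x, C⟩
  have key : ∀ y : X, |(univ.sup' univ_nonempty fun D : F => N q₁ (y, D)) -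
      (univ.sup' univ_nonempty fun D : F => N q₂ (y, D))| ≤ ‖q₁ - q₂‖ := by
    intro y
    have hb : ∀ D : F, |N q₁ (y, D) - N q₂ (y, D)| ≤ ‖q₁ - q₂‖ := by
      intro D
      calc |N q₁ (y, D) - N q₂ (y, D)| = ‖(N q₁ - N q₂) (y, D)‖ := by
            simp [Real.norm_eq_abs]
        _ ≤ ‖N q₁ - N q₂‖ := norm_le_pi_norm _ _
        _ ≤ ‖q₁ - q₂‖ := hN q₁ q₂
    rw [abs_sub_le_iff]
    constructor
    · rw [sub_le_iff_le_add]
      refine Finset.sup'_le _ _ fun D _ => ?_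
      have h1 := (abs_sub_le_iff.mp (hb D)).1
      have h2 : N q₂ (y, D) ≤ univ.sup' univ_nonempty fun D : F => N q₂ (y, D) :=
        Finset.le_sup' (fun D : F => N q₂ (y, D)) (mem_univ D)
      linarith
    · rw [sub_le_iff_le_add]
      refine Finset.sup'_le _ _ fun D _ => ?_
      have h1 := (abs_sub_le_iff.mp (hb D)).2
      have h2 : N q₁ (y, D) ≤ univ.sup' univ_nonempty fun D : F => N q₁ (y, D) :=
        Finset.le_sup' (fun D : F => N q₁ (y, D)) (mem_univ D)
      linarith
  have hdiff : (T q₁ - T q₂) (x, C) =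
      ∑ y, P x (C.1 x) y * (γ * ((univ.sup' univ_nonempty fun D : F => N q₁ (y, D)) -
        (univ.sup' univ_nonempty fun D : F => N q₂ (y, D)))) := by
    simp only [Pi.sub_apply, hT, ← Finset.sum_sub_distrib]
    congr 1; funext y; ring
  rw [Real.norm_eq_abs, hdiff]
  calc |∑ y, P x (C.1 x) y * (γ * ((univ.sup' univ_nonempty fun D : F => N q₁ (y, D)) -
        (univ.sup' univ_nonempty fun D : F => N q₂ (y, D))))|
      ≤ ∑ y, |P x (C.1 x) y * (γ * ((univ.sup' univ_nonempty fun D : F => N q₁ (y, D)) -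
        (univ.sup' univ_nonempty fun D : F => N q₂ (y, D))))| := Finset.abs_sum_le_sum_abs _ _
    _ ≤ ∑ y, P x (C.1 x) y * (γ * ‖q₁ - q₂‖) := by
        refine Finset.sum_le_sum fun y _ => ?_
        rw [abs_mul, abs_mul, abs_of_nonneg (hP0 x (C.1 x) y), abs_of_pos hγ0]
        exact mul_le_mul_of_nonneg_left (mul_le_mul_of_nonneg_left (key y) hγ0.le)
          (hP0 x (C.1 x) y)
    _ = γ * ‖q₁ - q₂‖ := by rw [← Finset.sum_mul, hP1]; ring
end

section
/- Suppose the neighborhood operator N is nonexpansive in the supremum norm, i.e., ‖N q₁ − N q₂‖∞ ≤ ‖q₁ − q₂‖∞ for all Q-functions q₁, q₂. Then there exists a unique Q-function q* satisfying the fixed-point equation q*(x,C) = Σ_{y∈X} P x (C x) y · ( r x (C x) y + γ · max_{D∈F} (N q*)(y,D) ) for all x ∈ X and C ∈ F; that is, T has a unique fixed point. -/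
open Finset

lemma sup'_sub_sup'_le_aux {ι : Type*} [Fintype ι] (s : Finset ι) (hs : s.Nonempty)
    (f g : ι → ℝ) (M : ℝ) (h : ∀ i, |f i - g i| ≤ M) :
    |s.sup' hs f - s.sup' hs g| ≤ M := by
  rw [abs_sub_le_iff]
  constructor
  · rw [sub_le_iff_le_add]
    apply Finset.sup'_le
    intro i hi
    have h1 := (abs_le.mp (h i)).2
    have h2 := Finset.le_sup' g hi
    linarith
  · rw [sub_le_iff_le_add]
    apply Finset.sup'_le
    intro i hi
    have h1 := (abs_le.mp (h i)).1
    have h2 := Finset.le_sup' f hi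
    linarith

/-- If the neighborhood operator `N` is nonexpansive in the sup norm, then there
exists a unique Q-function `q*` satisfying the fixed-point equation
`q*(x,C) = Σ_y P x (C x) y * (r x (C x) y + γ * max_D (N q*)(y,D))` for all `x, C`;
i.e., the operator `T` has a unique fixed point. -/
theorem stmt4 {X A : Type*} [Fintype X] [Nonempty X] [Fintype A] [Nonempty A]
    (F : Set (X → A)) [Fintype F] [Nonempty F]
    (P : X → A → X → ℝ) (hP0 : ∀ x a y, 0 ≤ P x a y) (hP1 : ∀ x a, ∑ y, P x a y = 1)
    (r : X → A → X → ℝ) (γ : ℝ) (hγ0 : 0 < γ) (hγ1 : γ < 1)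
    (N : (X × F → ℝ) → (X × F → ℝ))
    (hN : ∀ q₁ q₂ : X × F → ℝ, ‖N q₁ - N q₂‖ ≤ ‖q₁ - q₂‖) :
    ∃! qstar : X × F → ℝ, ∀ (x : X) (C : F), qstar (x, C) =
      ∑ y, P x (C.1 x) y *
        (r x (C.1 x) y + γ * (univ.sup' univ_nonempty fun D : F => N qstar (y, D))) := by
  set T : (X × F → ℝ) → (X × F → ℝ) := fun q p =>
    ∑ y, P p.1 (p.2.1 p.1) y *
      (r p.1 (p.2.1 p.1) y + γ * (univ.sup' univ_nonempty fun D : F => N q (y, D))) with hT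
  have hlip : LipschitzWith γ.toNNReal T := by
    apply LipschitzWith.of_dist_le_mul
    intro q₁ q₂
    rw [dist_eq_norm, dist_eq_norm]
    have hnn : (0:ℝ) ≤ γ.toNNReal * ‖q₁ - q₂‖ := by positivity
    rw [pi_norm_le_iff_of_nonneg hnn]
    intro p
    have key : ∀ y, |(univ.sup' univ_nonempty fun D : F => N q₁ (y, D)) -
        (univ.sup' univ_nonempty fun D : F => N q₂ (y, D))| ≤ ‖q₁ - q₂‖ := by
      intro y
      apply sup'_sub_sup'_le_aux
      intro D
      calc |N q₁ (y, D) - N q₂ (y, D)| = ‖(N q₁ - N q₂) (y, D)‖ := by simp [Real.norm_eq_abs]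
        _ ≤ ‖N q₁ - N q₂‖ := norm_le_pi_norm _ _
        _ ≤ ‖q₁ - q₂‖ := hN q₁ q₂
    have : (T q₁ - T q₂) p = ∑ y, P p.1 (p.2.1 p.1) y *
        (γ * ((univ.sup' univ_nonempty fun D : F => N q₁ (y, D)) -
          (univ.sup' univ_nonempty fun D : F => N q₂ (y, D)))) := by
      simp only [Pi.sub_apply, hT, ← Finset.sum_sub_distrib]
      congr 1; ext y; ring
    rw [Real.norm_eq_abs, this]
    calc |∑ y, P p.1 (p.2.1 p.1) y *
        (γ * ((univ.sup' univ_nonempty fun D : F => N q₁ (y, D)) -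
          (univ.sup' univ_nonempty fun D : F => N q₂ (y, D))))|
        ≤ ∑ y, |P p.1 (p.2.1 p.1) y *
        (γ * ((univ.sup' univ_nonempty fun D : F => N q₁ (y, D)) -
          (univ.sup' univ_nonempty fun D : F => N q₂ (y, D))))| := Finset.abs_sum_le_sum_abs _ _
      _ ≤ ∑ y, P p.1 (p.2.1 p.1) y * (γ * ‖q₁ - q₂‖) := by
          apply Finset.sum_le_sum
          intro y _
          rw [abs_mul, abs_of_nonneg (hP0 _ _ _), abs_mul, abs_of_nonneg hγ0.le]
          have := key y
          exact mul_le_mul_of_nonneg_left (mul_le_mul_of_nonneg_left this hγ0.le) (hP0 p.1 (p.2.1 p.1) y)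
      _ = γ * ‖q₁ - q₂‖ := by rw [← Finset.sum_mul, hP1, one_mul]
      _ = γ.toNNReal * ‖q₁ - q₂‖ := by
          rw [Real.coe_toNNReal _ hγ0.le]
  have hcontr : ContractingWith γ.toNNReal T := by
    constructor
    · exact_mod_cast (Real.toNNReal_lt_one).mpr hγ1
    · exact hlip
  have heq : ∀ q : X × F → ℝ, (∀ (x : X) (C : F), q (x, C) =
      ∑ y, P x (C.1 x) y *
        (r x (C.1 x) y + γ * (univ.sup' univ_nonempty fun D : F => N q (y, D)))) ↔
      Function.IsFixedPt T q := by
    intro q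
    constructor
    · intro h; funext p; exact (h p.1 p.2).symm
    · intro h x C; exact congrFun h (x, C) |>.symm
  refine ⟨hcontr.fixedPoint T, (heq _).mpr hcontr.fixedPoint_isFixedPt, ?_⟩
  intro q hq
  exact hcontr.fixedPoint_unique ((heq q).mp hq)
end

section
/- Let N be the identity operator on Q-functions (corresponding to ν(x) = {x}), let q* be the unique fixed point of T, and define V*(x) = max_{C∈F} q*(x,C). Assume the family F is sufficiently rich: for every function v : X → ℝ there exists C ∈ F such that for all x ∈ X, Σ_{y∈X} P x (C x) y · ( r x (C x) y + γ · v(y) ) = max_{a∈A} Σ_{y∈X} P x a y · ( r x a y + γ · v(y) ). Then V* satisfies the classical Bellman optimality equation of the MDP: for every x ∈ X, V*(x) = max_{a∈A} Σ_{y∈X} P x a y · ( r x a y + γ · V*(y) ); hence V* is the optimal value function of the MDP. -/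
open Finset

/-- With `N` the identity operator, `q*` the fixed point of `T`, and
`V*(x) = max_{C ∈ F} q*(x,C)`, if the family `F` is sufficiently rich (for every `v : X → ℝ`
some `C ∈ F` achieves the maximum over actions of the one-step lookahead at every state), then
`V*` satisfies the classical Bellman optimality equation of the MDP:
`V*(x) = max_{a ∈ A} Σ_y P x a y * (r x a y + γ * V*(y))`. -/
theorem stmt7 {X A : Type*} [Fintype X] [Nonempty X] [Fintype A] [Nonempty A]
    (F : Set (X → A)) [Fintype F] [Nonempty F]
    (P : X → A → X → ℝ) (hP0 : ∀ x a y, 0 ≤ P x a y) (hP1 : ∀ x a, ∑ y, P x a y = 1)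
    (r : X → A → X → ℝ) (γ : ℝ) (hγ0 : 0 < γ) (hγ1 : γ < 1)
    (qstar : X × F → ℝ)
    (hfix : ∀ (x : X) (C : F), qstar (x, C) =
      ∑ y, P x (C.1 x) y *
        (r x (C.1 x) y + γ * (univ.sup' univ_nonempty fun D : F => qstar (y, D))))
    (Vstar : X → ℝ)
    (hV : ∀ x, Vstar x = univ.sup' univ_nonempty fun C : F => qstar (x, C))
    (hrich : ∀ v : X → ℝ, ∃ C : F, ∀ x,
      ∑ y, P x (C.1 x) y * (r x (C.1 x) y + γ * v y) =
        univ.sup' univ_nonempty fun a : A => ∑ y, P x a y * (r x a y + γ * v y)) :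
    ∀ x, Vstar x = univ.sup' univ_nonempty fun a : A =>
      ∑ y, P x a y * (r x a y + γ * Vstar y) := by
  intro x
  have key : ∀ (z : X) (C : F), qstar (z, C) =
      ∑ y, P z (C.1 z) y * (r z (C.1 z) y + γ * Vstar y) := by
    intro z C
    rw [hfix z C]
    exact Finset.sum_congr rfl fun y _ => by rw [hV y]
  apply le_antisymm
  · rw [hV x]
    apply Finset.sup'_le
    intro C _
    rw [key x C]
    exact Finset.le_sup' (f := fun a : A => ∑ y, P x a y * (r x a y + γ * Vstar y))
      (Finset.mem_univ (C.1 x))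
  · obtain ⟨C, hC⟩ := hrich Vstar
    rw [← hC x, ← key x C, hV x]
    exact Finset.le_sup' (f := fun D : F => qstar (x, D)) (Finset.mem_univ C)
end

section
/- Let N be the maximum neighborhood operator, (N q)(x,C) = max_{z∈ν(x)} q(z,C), let q* be the unique fixed point of T, and define V*(x) = max_{C∈F} max_{z∈ν(x)} q*(z,C). Then V* is a supersolution of the Bellman equation over the policy family F: for every x ∈ X, V*(x) ≥ max_{C∈F} Σ_{y∈X} P x (C x) y · ( r x (C x) y + γ · V*(y) ). -/
open Finset

/-- With `N` the maximum neighborhood operator, `q*` the fixed point of `T`, and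
`V*(x) = max_{C ∈ F} max_{z ∈ ν(x)} q*(z,C)`, the function `V*` is a supersolution of the
Bellman equation over the policy family `F`:
`V*(x) ≥ max_{C ∈ F} Σ_y P x (C x) y * (r x (C x) y + γ * V*(y))`. -/
theorem stmt8 {X A : Type*} [Fintype X] [Nonempty X] [Fintype A] [Nonempty A]
    (F : Set (X → A)) [Fintype F] [Nonempty F]
    (P : X → A → X → ℝ) (hP0 : ∀ x a y, 0 ≤ P x a y) (hP1 : ∀ x a, ∑ y, P x a y = 1)
    (r : X → A → X → ℝ) (γ : ℝ) (hγ0 : 0 < γ) (hγ1 : γ < 1)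
    (ν : X → Finset X) (hν : ∀ x, (ν x).Nonempty) (hxν : ∀ x, x ∈ ν x)
    (N : (X × F → ℝ) → (X × F → ℝ))
    (hN : ∀ (q : X × F → ℝ) (x : X) (C : F),
      N q (x, C) = (ν x).sup' (hν x) (fun z => q (z, C)))
    (qstar : X × F → ℝ)
    (hfix : ∀ (x : X) (C : F), qstar (x, C) =
      ∑ y, P x (C.1 x) y *
        (r x (C.1 x) y + γ * (univ.sup' univ_nonempty fun D : F => N qstar (y, D))))
    (Vstar : X → ℝ)
    (hV : ∀ x, Vstar x = univ.sup' univ_nonempty fun C : F =>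
      (ν x).sup' (hν x) fun z => qstar (z, C)) :
    ∀ x, (univ.sup' univ_nonempty fun C : F =>
      ∑ y, P x (C.1 x) y * (r x (C.1 x) y + γ * Vstar y)) ≤ Vstar x := by
  have key : ∀ y, (univ.sup' univ_nonempty fun D : F => N qstar (y, D)) = Vstar y := by
    intro y
    rw [hV]
    exact Finset.sup'_congr _ rfl fun D _ => hN qstar y D
  intro x
  rw [Finset.sup'_le_iff]
  intro C _
  have hq : ∑ y, P x (C.1 x) y * (r x (C.1 x) y + γ * Vstar y) = qstar (x, C) := by
    rw [hfix]
    exact Finset.sum_congr rfl fun y _ => by rw [key]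
  rw [hq, hV]
  exact le_trans (Finset.le_sup' (fun z => qstar (z, C)) (hxν x))
    (Finset.le_sup' (fun D : F => (ν x).sup' (hν x) fun z => qstar (z, D)) (mem_univ C))
end

section
/- Let N be the maximum neighborhood operator, (N q)(x,C) = max_{z∈ν(x)} q(z,C), let q* be the unique fixed point of T, and define V*(x) = max_{C∈F} max_{z∈ν(x)} q*(z,C). Let v_F : X → ℝ be the fixed point of the Bellman operator over F, i.e., v_F(x) = max_{C∈F} Σ_{y∈X} P x (C x) y · ( r x (C x) y + γ · v_F(y) ) for all x. Then V*(x) ≥ v_F(x) for all x ∈ X; that is, V* is an upper bound on the optimal value function of the MDP over the policy family F. -/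
open Finset

/-- With `N` the maximum neighborhood operator, `q*` the unique fixed point of
`T`, and `V*(x) = max_{C ∈ F} max_{z ∈ ν(x)} q*(z,C)`, if `v_F` is the fixed point of the
Bellman operator over `F`, then `V*(x) ≥ v_F(x)` for all `x`; i.e. `V*` is an upper bound on
the optimal value function of the MDP over the policy family `F`. -/
theorem stmt10 {X A : Type*} [Fintype X] [Nonempty X] [Fintype A] [Nonempty A]
    (F : Set (X → A)) [Fintype F] [Nonempty F]
    (P : X → A → X → ℝ) (hP0 : ∀ x a y, 0 ≤ P x a y) (hP1 : ∀ x a, ∑ y, P x a y = 1)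
    (r : X → A → X → ℝ) (γ : ℝ) (hγ0 : 0 < γ) (hγ1 : γ < 1)
    (ν : X → Finset X) (hν : ∀ x, (ν x).Nonempty) (hxν : ∀ x, x ∈ ν x)
    (N : (X × F → ℝ) → (X × F → ℝ))
    (hN : ∀ (q : X × F → ℝ) (x : X) (C : F),
      N q (x, C) = (ν x).sup' (hν x) (fun z => q (z, C)))
    (qstar : X × F → ℝ)
    (hfix : ∀ (x : X) (C : F), qstar (x, C) =
      ∑ y, P x (C.1 x) y *
        (r x (C.1 x) y + γ * (univ.sup' univ_nonempty fun D : F => N qstar (y, D))))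
    (Vstar : X → ℝ)
    (hV : ∀ x, Vstar x = univ.sup' univ_nonempty fun C : F =>
      (ν x).sup' (hν x) fun z => qstar (z, C))
    (vF : X → ℝ)
    (hvF : ∀ x, vF x = univ.sup' univ_nonempty fun C : F =>
      ∑ y, P x (C.1 x) y * (r x (C.1 x) y + γ * vF y)) :
    ∀ x, vF x ≤ Vstar x := by

  -- sup'_D N qstar (y,D) = Vstar y
  have hNV : ∀ y : X, (univ.sup' univ_nonempty fun D : F => N qstar (y, D)) = Vstar y := by
    intro y
    rw [hV]
    exact Finset.sup'_congr _ rfl (fun D _ => hN qstar y D)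
  -- Vstar x ≥ qstar (x, C)
  have hVq : ∀ (x : X) (C : F), qstar (x, C) ≤ Vstar x := by
    intro x C
    rw [hV]
    exact le_trans (Finset.le_sup' (fun z => qstar (z, C)) (hxν x))
      (Finset.le_sup' (fun C : F => (ν x).sup' (hν x) fun z => qstar (z, C))
        (Finset.mem_univ C))
  set M := univ.sup' univ_nonempty (fun x => vF x - Vstar x) with hM
  have hle : ∀ x, vF x - Vstar x ≤ M := fun x => Finset.le_sup' (fun x => vF x - Vstar x) (Finset.mem_univ x)
  have hkey : ∀ x, vF x - Vstar x ≤ γ * M := by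
    intro x
    have h1 : vF x ≤ γ * M + Vstar x := by
      rw [hvF]
      apply Finset.sup'_le
      intro C _
      have h2 : (∑ y, P x (C.1 x) y * (r x (C.1 x) y + γ * vF y))
          - (∑ y, P x (C.1 x) y * (r x (C.1 x) y + γ * Vstar y)) ≤ γ * M := by
        rw [← Finset.sum_sub_distrib]
        have : ∀ y ∈ (univ : Finset X),
            P x (C.1 x) y * (r x (C.1 x) y + γ * vF y)
              - P x (C.1 x) y * (r x (C.1 x) y + γ * Vstar y)
            ≤ P x (C.1 x) y * (γ * M) := by
          intro y _
          have := hle y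
          have hp := hP0 x (C.1 x) y
          have h4 := mul_le_mul_of_nonneg_left this (mul_nonneg hp hγ0.le)
          nlinarith [h4]
        calc (∑ y, (P x (C.1 x) y * (r x (C.1 x) y + γ * vF y)
              - P x (C.1 x) y * (r x (C.1 x) y + γ * Vstar y)))
            ≤ ∑ y, P x (C.1 x) y * (γ * M) := Finset.sum_le_sum this
          _ = γ * M := by rw [← Finset.sum_mul, hP1]; ring
      have h3 : (∑ y, P x (C.1 x) y * (r x (C.1 x) y + γ * Vstar y)) ≤ Vstar x := by
        have := hfix x C
        simp only [hNV] at this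
        rw [← this]
        exact hVq x C
      linarith
    linarith
  have hMle : M ≤ γ * M := by
    apply Finset.sup'_le
    intro x _
    exact hkey x
  have hM0 : M ≤ 0 := by nlinarith
  intro x
  have := hle x
  linarith
end

section
/- Let p : X → Fin M be a surjective map partitioning X into M nonempty regions Ω_i = {z ∈ X : p z = i}, and let ζ : X → ℝ satisfy ζ z ≥ 0 for all z and Σ_{z : p z = i} ζ z = 1 for every i. For C ∈ F define P̄ C i j = Σ_{z : p z = i} Σ_{y : p y = j} ζ z · P z (C z) y and r̄ i C j = ( Σ_{z : p z = i} Σ_{y : p y = j} ζ z · P z (C z) y · r z (C z) y ) / (P̄ C i j) (with the convention that division by zero yields zero). Then for every function V : Fin M → ℝ, every C ∈ F, and every i: Σ_{z : p z = i} ζ z · Σ_{y∈X} P z (C z) y · ( r z (C z) y + γ · V(p y) ) = Σ_{j} P̄ C i j · ( r̄ i C j + γ · V j ). Consequently, V satisfies the aggregated optimality equation V i = max_{C∈F} Σ_{z : p z = i} ζ z · Σ_{y∈X} P z (C z) y · ( r z (C z) y + γ · V(p y) ) for all i if and only if V satisfies the Bellman equation V i = max_{C∈F} Σ_{j} P̄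 C i j · ( r̄ i C j + γ · V j ) of the aggregated MDP with states Fin M, actions F, transition probabilities P̄ and rewards r̄. -/
open Finset

/-- With the aggregated kernel `P̄` and aggregated rewards `r̄` (defined with the
convention that division by zero yields zero), for every `V : Fin M → ℝ`, `C ∈ F` and region
`i`, the ζ-averaged one-step lookahead equals the aggregated one-step lookahead; consequently
`V` satisfies the aggregated optimality equation iff it satisfies the Bellman equation of the
aggregated MDP with states `Fin M`, actions `F`, transitions `P̄` and rewards `r̄`. -/
theorem stmt12 {X A : Type*} [Fintype X] [Nonempty X] [Fintype A] [Nonempty A]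
    (F : Set (X → A)) [Fintype F] [Nonempty F]
    (P : X → A → X → ℝ) (hP0 : ∀ x a y, 0 ≤ P x a y) (hP1 : ∀ x a, ∑ y, P x a y = 1)
    (r : X → A → X → ℝ) (γ : ℝ) (hγ0 : 0 < γ) (hγ1 : γ < 1)
    (M : ℕ) (hM : 0 < M) (p : X → Fin M) (hp : Function.Surjective p)
    (ζ : X → ℝ) (hζ0 : ∀ z, 0 ≤ ζ z)
    (hζ1 : ∀ i : Fin M, ∑ z ∈ univ.filter (fun z => p z = i), ζ z = 1)
    (Pbar : F → Fin M → Fin M → ℝ)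
    (hPbar : ∀ (C : F) (i j : Fin M), Pbar C i j =
      ∑ z ∈ univ.filter (fun z => p z = i),
        ∑ y ∈ univ.filter (fun y => p y = j), ζ z * P z (C.1 z) y)
    (rbar : Fin M → F → Fin M → ℝ)
    (hrbar : ∀ (i : Fin M) (C : F) (j : Fin M), rbar i C j =
      (∑ z ∈ univ.filter (fun z => p z = i),
        ∑ y ∈ univ.filter (fun y => p y = j),
          ζ z * P z (C.1 z) y * r z (C.1 z) y) / Pbar C i j) :
    (∀ (V : Fin M → ℝ) (C : F) (i : Fin M),
      ∑ z ∈ univ.filter (fun z => p z = i),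
        ζ z * ∑ y, P z (C.1 z) y * (r z (C.1 z) y + γ * V (p y)) =
      ∑ j, Pbar C i j * (rbar i C j + γ * V j)) ∧
    (∀ V : Fin M → ℝ,
      (∀ i : Fin M, V i = univ.sup' univ_nonempty fun C : F =>
        ∑ z ∈ univ.filter (fun z => p z = i),
          ζ z * ∑ y, P z (C.1 z) y * (r z (C.1 z) y + γ * V (p y))) ↔
      (∀ i : Fin M, V i = univ.sup' univ_nonempty fun C : F =>
        ∑ j, Pbar C i j * (rbar i C j + γ * V j))) := by

  classical
  have hkey : ∀ (V : Fin M → ℝ) (C : F) (i : Fin M),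
      ∑ z ∈ univ.filter (fun z => p z = i),
        ζ z * ∑ y, P z (C.1 z) y * (r z (C.1 z) y + γ * V (p y)) =
      ∑ j, Pbar C i j * (rbar i C j + γ * V j) := by
    intro V C i
    have hnum : ∀ j : Fin M, Pbar C i j * rbar i C j =
        ∑ z ∈ univ.filter (fun z => p z = i),
          ∑ y ∈ univ.filter (fun y => p y = j),
            ζ z * P z (C.1 z) y * r z (C.1 z) y := by
      intro j
      rw [hrbar]
      by_cases h : Pbar C i j = 0
      · rw [h, zero_mul]
        symm
        apply Finset.sum_eq_zero; intro z hz
        apply Finset.sum_eq_zero; intro y hy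
        have hterm : ζ z * P z (C.1 z) y = 0 := by
          have hle : ζ z * P z (C.1 z) y ≤ Pbar C i j := by
            rw [hPbar]
            calc ζ z * P z (C.1 z) y
                ≤ ∑ y ∈ univ.filter (fun y => p y = j), ζ z * P z (C.1 z) y :=
                  Finset.single_le_sum (f := fun y => ζ z * P z (C.1 z) y)
                    (fun y _ => mul_nonneg (hζ0 z) (hP0 _ _ _)) hy
              _ ≤ _ := Finset.single_le_sum
                  (f := fun z => ∑ y ∈ univ.filter (fun y => p y = j), ζ z * P z (C.1 z) y)
                  (fun z _ => Finset.sum_nonneg fun y _ => mul_nonneg (hζ0 z) (hP0 _ _ _)) hz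
          have hge : 0 ≤ ζ z * P z (C.1 z) y := mul_nonneg (hζ0 z) (hP0 _ _ _)
          linarith [h ▸ hle]
        rw [hterm, zero_mul]
      · rw [mul_comm, div_mul_cancel₀ _ h]
    have hfib : ∀ z : X, ∑ y, P z (C.1 z) y * (r z (C.1 z) y + γ * V (p y)) =
        ∑ j : Fin M, ∑ y ∈ univ.filter (fun y => p y = j),
          P z (C.1 z) y * (r z (C.1 z) y + γ * V j) := by
      intro z
      rw [← Finset.sum_fiberwise univ p (fun y => P z (C.1 z) y * (r z (C.1 z) y + γ * V (p y)))]
      apply Finset.sum_congr rfl; intro j _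
      apply Finset.sum_congr rfl; intro y hy
      rw [Finset.mem_filter] at hy
      rw [hy.2]
    calc ∑ z ∈ univ.filter (fun z => p z = i),
          ζ z * ∑ y, P z (C.1 z) y * (r z (C.1 z) y + γ * V (p y))
        = ∑ j : Fin M, ∑ z ∈ univ.filter (fun z => p z = i),
            ∑ y ∈ univ.filter (fun y => p y = j),
              ζ z * (P z (C.1 z) y * (r z (C.1 z) y + γ * V j)) := by
          rw [Finset.sum_comm]
          apply Finset.sum_congr rfl; intro z _
          rw [hfib z, Finset.mul_sum]
          apply Finset.sum_congr rfl; intro j _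
          rw [Finset.mul_sum]
      _ = ∑ j, Pbar C i j * (rbar i C j + γ * V j) := by
          apply Finset.sum_congr rfl; intro j _
          rw [mul_add, hnum j, hPbar]
          simp only [Finset.sum_mul]
          rw [← Finset.sum_add_distrib]
          apply Finset.sum_congr rfl; intro z _
          rw [← Finset.sum_add_distrib]
          apply Finset.sum_congr rfl; intro y _
          ring
    done
  refine ⟨hkey, fun V => ?_⟩
  constructor <;> intro h i <;> rw [h i] <;>
    exact Finset.sup'_congr _ rfl (fun C _ => by rw [hkey V C i])
end

section
/- Let N be the maximum neighborhood operator, (N q)(x,C) = max_{z∈ν(x)} q(z,C), let q* be the unique fixed point of T, and define V*(x) = max_{C∈F} max_{z∈ν(x)} q*(z,C). Then V* satisfies, for every x ∈ X: V*(x) = max_{C∈F} max_{z∈ν(x)} Σ_{y∈X} P z (C z) y · ( r z (C z) y + γ · V*(y) ). -/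
open Finset

/-- With `N` the maximum neighborhood operator, `q*` the unique fixed point of
`T`, and `V*(x) = max_{C ∈ F} max_{z ∈ ν(x)} q*(z,C)`, the function `V*` satisfies
`V*(x) = max_{C ∈ F} max_{z ∈ ν(x)} Σ_y P z (C z) y * (r z (C z) y + γ * V*(y))`. -/
theorem stmt17 {X A : Type*} [Fintype X] [Nonempty X] [Fintype A] [Nonempty A]
    (F : Set (X → A)) [Fintype F] [Nonempty F]
    (P : X → A → X → ℝ) (hP0 : ∀ x a y, 0 ≤ P x a y) (hP1 : ∀ x a, ∑ y, P x a y = 1)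
    (r : X → A → X → ℝ) (γ : ℝ) (hγ0 : 0 < γ) (hγ1 : γ < 1)
    (ν : X → Finset X) (hν : ∀ x, (ν x).Nonempty) (hxν : ∀ x, x ∈ ν x)
    (N : (X × F → ℝ) → (X × F → ℝ))
    (hN : ∀ (q : X × F → ℝ) (x : X) (C : F),
      N q (x, C) = (ν x).sup' (hν x) (fun z => q (z, C)))
    (qstar : X × F → ℝ)
    (hfix : ∀ (x : X) (C : F), qstar (x, C) =
      ∑ y, P x (C.1 x) y *
        (r x (C.1 x) y + γ * (univ.sup' univ_nonempty fun D : F => N qstar (y, D))))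
    (Vstar : X → ℝ)
    (hV : ∀ x, Vstar x = univ.sup' univ_nonempty fun C : F =>
      (ν x).sup' (hν x) fun z => qstar (z, C)) :
    ∀ x, Vstar x = univ.sup' univ_nonempty fun C : F =>
      (ν x).sup' (hν x) fun z =>
        ∑ y, P z (C.1 z) y * (r z (C.1 z) y + γ * Vstar y) := by
  have key : ∀ y, (univ.sup' univ_nonempty fun D : F => N qstar (y, D)) = Vstar y := by
    intro y
    rw [hV y]
    exact Finset.sup'_congr _ rfl fun D _ => hN qstar y D
  intro x
  rw [hV x]
  refine Finset.sup'_congr _ rfl fun C _ => ?_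
  refine Finset.sup'_congr _ rfl fun z _ => ?_
  rw [hfix z C]
  exact Finset.sum_congr rfl fun y _ => by rw [key y]
end
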